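/- Every finite simple graph with maximum degree at most 2 and at least two edges (in particular, every path with at least two edges and every cycle) is P2-win in Trail Trap. -/

import Mathlib

open SimpleGraph

/-- A valid partial play of Trail Trap: a list of moves (directed edges), where each
move is along an edge of `G`, no edge (as an unordered pair) is used twice, and each
player's moves form a trail (move `i+2` starts where move `i` ended). Moves at even
indices belong to Player 1 and moves at odd indices to Player 2. -/
def ValidPlay {V : Type*} (G : SimpleGraph V) (l : List (V × V)) : Prop :=
  (∀ m ∈ l, G.Adj m.1 m.2) ∧
  (l.map (fun m => s(m.1, m.2))).Nodup ∧
  ∀ (i : ℕ) (h : i + 2 < l.length),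
    (l.get ⟨i + 2, h⟩).1 = (l.get ⟨i, by omega⟩).2

/-- The play `l` follows strategy `σ` on all turns with index `≡ t (mod 2)`. -/
def FollowsAt {V : Type*} (σ : List (V × V) → V × V) (t : ℕ) (l : List (V × V)) : Prop :=
  ∀ (i : ℕ) (h : i < l.length), i % 2 = t → l.get ⟨i, h⟩ = σ (l.take i)

/-- Player 1 has a winning strategy in Trail Trap on `G`: a strategy `σ` for the
even-indexed moves such that every `σ`-consistent valid play that cannot be
`σ`-consistently extended has odd length (i.e. Player 2 is the one stuck). -/
def P1Win {V : Type*} (G : SimpleGraph V) : Prop :=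
  ∃ σ : List (V × V) → V × V, ∀ l : List (V × V),
    ValidPlay G l → FollowsAt σ 0 l →
    (∀ m : V × V, ¬ (ValidPlay G (l ++ [m]) ∧ FollowsAt σ 0 (l ++ [m]))) →
    l.length % 2 = 1

/-- Player 2 has a winning strategy in Trail Trap on `G`. -/
def P2Win {V : Type*} (G : SimpleGraph V) : Prop :=
  ∃ σ : List (V × V) → V × V, ∀ l : List (V × V),
    ValidPlay G l → FollowsAt σ 1 l →
    (∀ m : V × V, ¬ (ValidPlay G (l ++ [m]) ∧ FollowsAt σ 1 (l ++ [m]))) →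
    l.length % 2 = 0

/-- Player 1 has a winning strategy in Trail Trap on `G` whose first move is `u → v`. -/
def P1WinFrom {V : Type*} (G : SimpleGraph V) (u v : V) : Prop :=
  ∃ σ : List (V × V) → V × V, σ [] = (u, v) ∧ ∀ l : List (V × V),
    ValidPlay G l → FollowsAt σ 0 l →
    (∀ m : V × V, ¬ (ValidPlay G (l ++ [m]) ∧ FollowsAt σ 0 (l ++ [m]))) →
    l.length % 2 = 1

/-- Player 2 has a winning strategy in Trail Trap on `G`, given that Player 1's first
move was `u → v`. -/
def P2WinAfter {V : Type*} (G : SimpleGraph V) (u v : V) : Prop :=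
  ∃ σ : List (V × V) → V × V, ∀ l : List (V × V),
    l.head? = some (u, v) → ValidPlay G l → FollowsAt σ 1 l →
    (∀ m : V × V, ¬ (ValidPlay G (l ++ [m]) ∧ FollowsAt σ 1 (l ++ [m]))) →
    l.length % 2 = 0

/-- Every finite graph with maximum degree at most 2 and at least two edges is
P2-win in Trail Trap. -/
theorem stmt_5 {V : Type*} [Fintype V] [DecidableEq V] (G : SimpleGraph V)
    [DecidableRel G.Adj] (hdeg : G.maxDegree ≤ 2) (h2 : 2 ≤ G.edgeFinset.card) :
    P2Win G := by
  classical
  have hVne : Nonempty V := by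
    by_contra h
    rw [not_nonempty_iff] at h
    have hcard : G.edgeFinset.card = 0 := by
      rw [Finset.card_eq_zero, Finset.eq_empty_iff_forall_notMem]
      intro e
      induction e using Sym2.ind with
      | _ a b => exact (h.false a).elim
    omega
  obtain ⟨v0⟩ := hVne
  have hdeg2 : ∀ v : V, G.degree v ≤ 2 := fun v => (G.degree_le_maxDegree v).trans hdeg
  have hex : ∀ u v : V, G.Adj u v →
      ∃ p : V × V, G.Adj p.1 p.2 ∧ s(p.1, p.2) ≠ s(u, v) := by
    intro u v huv
    obtain ⟨e, he, hne⟩ :=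
      Finset.exists_mem_ne (s := G.edgeFinset) (by omega) s(u, v)
    induction e using Sym2.ind with
    | _ a b => exact ⟨(a, b), by simpa using he, hne⟩
  set reply : V × V → V × V := fun m =>
    if hw : ∃ w, w ≠ m.1 ∧ G.Adj m.2 w then (m.2, hw.choose)
    else if hp : ∃ p : V × V, G.Adj p.1 p.2 ∧ s(p.1, p.2) ≠ s(m.1, m.2) then hp.choose
    else m with hreplydef
  have key : ∀ m : V × V, G.Adj m.1 m.2 →
      G.Adj (reply m).1 (reply m).2 ∧
      s((reply m).1, (reply m).2) ≠ s(m.1, m.2) ∧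
      ∀ x, G.Adj m.2 x → s(m.2, x) = s(m.1, m.2) ∨ s(m.2, x) = s((reply m).1, (reply m).2) := by
    rintro ⟨u, v⟩ huv
    simp only at huv ⊢
    by_cases hw : ∃ w, w ≠ u ∧ G.Adj v w
    · have hrw : reply (u, v) = (v, hw.choose) := by
        rw [hreplydef]; exact dif_pos hw
      obtain ⟨hwu, hwadj⟩ := hw.choose_spec
      rw [hrw]
      refine ⟨hwadj, ?_, ?_⟩
      · intro hcon
        rcases Sym2.eq_iff.mp hcon with ⟨h1, h2⟩ | ⟨h1, h2⟩
        · exact G.loopless.irrefl u (h1 ▸ huv)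
        · exact hwu h2
      · intro x hx
        by_cases hxu : x = u
        · left; rw [hxu]; exact Sym2.eq_swap
        · right
          have hxw : x = hw.choose := by
            by_contra hxw
            have hsub : ({u, hw.choose, x} : Finset V) ⊆ G.neighborFinset v := by
              intro y hy
              simp only [Finset.mem_insert, Finset.mem_singleton] at hy
              rcases hy with rfl | rfl | rfl
              · exact G.mem_neighborFinset v y |>.mpr huv.symm
              · exact G.mem_neighborFinset v _ |>.mpr hwadj
              · exact G.mem_neighborFinset v _ |>.mpr hx
            have hc3 : ({u, hw.choose, x} : Finset V).card = 3 := by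
              rw [Finset.card_eq_three]
              exact ⟨u, hw.choose, x, fun h => hwu h.symm, fun h => hxu h.symm,
                fun h => hxw h.symm, rfl⟩
            have := (Finset.card_le_card hsub).trans ((G.card_neighborFinset_eq_degree v) ▸ hdeg2 v)
            omega
          rw [hxw]
    · have hp : ∃ p : V × V, G.Adj p.1 p.2 ∧ s(p.1, p.2) ≠ s(u, v) := hex u v huv
      have hrw : reply (u, v) = hp.choose := by
        rw [hreplydef]
        simp only
        rw [dif_neg hw, dif_pos hp]
      obtain ⟨hpa, hpn⟩ := hp.choose_spec
      rw [hrw]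
      refine ⟨hpa, by simpa using hpn, ?_⟩
      intro x hx
      push_neg at hw
      have hxu : x = u := by
        by_contra hxu
        exact (hw x hxu) hx
      left; rw [hxu]; exact Sym2.eq_swap
  set σ : List (V × V) → V × V := fun l =>
    match l with
    | [] => (v0, v0)
    | m :: _ => reply m with hσdef
  refine ⟨σ, ?_⟩
  intro l hval hfol hterm
  rcases Nat.lt_or_ge l.length 3 with h3 | h3
  · -- length 0, 1, or 2; only length 1 needs work
    by_contra h0
    have hl1 : l.length = 1 := by omega
    obtain ⟨m0, rfl⟩ := List.length_eq_one_iff.mp hl1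
    have hm0 : G.Adj m0.1 m0.2 := hval.1 m0 (by simp)
    obtain ⟨hradj, hrne, -⟩ := key m0 hm0
    refine hterm (σ [m0]) ⟨?_, ?_⟩
    · have hσm0 : σ [m0] = reply m0 := rfl
      rw [hσm0]
      refine ⟨?_, ?_, ?_⟩
      · intro m hm
        simp only [List.singleton_append, List.mem_cons, List.not_mem_nil, or_false] at hm
        rcases hm with rfl | rfl
        · exact hm0
        · exact hradj
      · simp only [List.singleton_append, List.map_cons, List.map_nil, List.nodup_cons,
          List.mem_singleton, List.not_mem_nil, not_false_iff, List.nodup_nil, and_true]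
        exact fun h => hrne h.symm
      · intro i hi
        simp only [List.length_append, List.length_singleton] at hi
        omega
    · intro i hi hi1
      simp only [List.length_append, List.length_singleton] at hi
      have : i = 1 := by omega
      subst this
      rfl
  · -- length ≥ 3 is impossible
    exfalso
    match l, h3 with
    | a :: b :: c :: t, _ =>
      have ha : G.Adj a.1 a.2 := hval.1 a (by simp)
      have hc : G.Adj c.1 c.2 := hval.1 c (by simp)
      have htrail := hval.2.2 0 (by simp)
      have hc1 : c.1 = a.2 := htrail
      have hb : b = reply a := by
        have := hfol 1 (by simp) rfl
        exact this
      have hnd := hval.2.1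
      simp only [List.map_cons, List.nodup_cons, List.mem_cons, not_or] at hnd
      have hca : s(c.1, c.2) ≠ s(a.1, a.2) := fun h => hnd.1.2.1 h.symm
      have hcb : s(c.1, c.2) ≠ s(b.1, b.2) := fun h => hnd.2.1.1 h.symm
      obtain ⟨-, -, hall⟩ := key a ha
      have hadj' : G.Adj a.2 c.2 := hc1 ▸ hc
      rcases hall c.2 hadj' with h | h
      · exact hca (by rw [hc1]; exact h)
      · refine hcb ?_
        rw [hc1, hb]
        exact h
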